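/- There exist ε₀ > 0 and a₁ > 0 such that for every a ≥ a₁ and every τ ∈ [0,1], any solution (0, μ) of the slab problem P_{τ,a} with speed c = 0 satisfies ν(0) > ε₀. -/

import Mathlib

open Set Filter MeasureTheory

lemma aux_integrableOn_Ioo {h : ℝ × ℝ → ℝ} (hc : Continuous h) {b c : ℝ} (ξ : ℝ) :
    IntegrableOn (fun t => h (ξ, t)) (Set.Ioo b c) := by
  have : Continuous fun t : ℝ => h (ξ, t) := hc.comp (Continuous.prodMk_right ξ)
  exact (this.continuousOn.integrableOn_compact isCompact_Icc).mono_set Set.Ioo_subset_Icc_self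

lemma aux_hasDerivAt_param {h h' : ℝ × ℝ → ℝ} (hc : Continuous h) (hc' : Continuous h')
    (hd : ∀ t x, HasDerivAt (fun y => h (y, t)) (h' (x, t)) x) (b c x₀ : ℝ) :
    HasDerivAt (fun ξ => ∫ t in Set.Ioo b c, h (ξ, t)) (∫ t in Set.Ioo b c, h' (x₀, t)) x₀ := by
  obtain ⟨M, hM⟩ := ((isCompact_Icc (a := x₀ - 1) (b := x₀ + 1)).prod
    (isCompact_Icc (a := b) (b := c))).exists_bound_of_continuousOn hc'.continuousOn
  have key := hasDerivAt_integral_of_dominated_loc_of_deriv_le (𝕜 := ℝ)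
      (F := fun x t => h (x, t)) (F' := fun x t => h' (x, t)) (bound := fun _ => M)
      (μ := volume.restrict (Set.Ioo b c)) (x₀ := x₀) (s := Metric.ball x₀ 1) (Metric.ball_mem_nhds x₀ one_pos)
      (Filter.Eventually.of_forall fun x =>
        (hc.comp (Continuous.prodMk_right x)).aestronglyMeasurable)
      (aux_integrableOn_Ioo hc x₀)
      ((hc'.comp (Continuous.prodMk_right x₀)).aestronglyMeasurable)
      ?_ ?_ ?_
  · exact key.2
  · rw [ae_restrict_iff' measurableSet_Ioo]
    refine ae_of_all _ fun t ht x hx => ?_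
    refine hM (x, t) ⟨?_, Set.Ioo_subset_Icc_self ht⟩
    have : x ∈ Set.Ioo (x₀ - 1) (x₀ + 1) := by rwa [Real.ball_eq_Ioo] at hx
    exact Set.Ioo_subset_Icc_self this
  · refine integrableOn_const ?_
    simp [Real.volume_Ioo]
  · exact ae_of_all _ fun t x _ => hd t x

lemma aux_hasDerivAt_fst {f : ℝ × ℝ → ℝ} (hf : Differentiable ℝ f) (θ ξ : ℝ) :
    HasDerivAt (fun x => f (x, θ)) (fderiv ℝ f (ξ, θ) (1, 0)) ξ := by
  have h1 : HasDerivAt (fun x : ℝ => (x, θ)) ((1 : ℝ), (0 : ℝ)) ξ :=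
    (hasDerivAt_id ξ).prodMk (hasDerivAt_const ξ θ)
  exact (hf (ξ, θ)).hasFDerivAt.comp_hasDerivAt ξ h1

lemma aux_hasDerivAt_snd {f : ℝ × ℝ → ℝ} (hf : Differentiable ℝ f) (ξ θ : ℝ) :
    HasDerivAt (fun t => f (ξ, t)) (fderiv ℝ f (ξ, θ) (0, 1)) θ := by
  have h1 : HasDerivAt (fun t : ℝ => (ξ, t)) ((0 : ℝ), (1 : ℝ)) θ :=
    (hasDerivAt_const θ ξ).prodMk (hasDerivAt_id θ)
  exact (hf (ξ, θ)).hasFDerivAt.comp_hasDerivAt θ h1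


/-- A solution of the slab problem `P_{τ,a}`: a nonnegative twice continuously
differentiable function solving the equation with diffusivity `g_τ(θ) = thmin + τ(θ - thmin)`
on `(-a, a) × (thmin, thmax)`, with Neumann conditions in `θ` and the prescribed
boundary values at `ξ = ±a`. -/
def IsSlabSolution (thmin thmax alpha r τ a c : ℝ) (μ : ℝ → ℝ → ℝ) : Prop :=
  (∀ ξ ∈ Set.Icc (-a) a, ∀ θ ∈ Set.Icc thmin thmax, 0 ≤ μ ξ θ) ∧
  ContDiff ℝ 2 (Function.uncurry μ) ∧
  (∀ ξ ∈ Set.Ioo (-a) a, ∀ θ ∈ Set.Ioo thmin thmax,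
    -(c * deriv (fun x => μ x θ) ξ)
      - (thmin + τ * (θ - thmin)) * iteratedDeriv 2 (fun x => μ x θ) ξ
      - alpha * iteratedDeriv 2 (fun t => μ ξ t) θ
      = r * μ ξ θ * (1 - ∫ t in Set.Ioo thmin thmax, μ ξ t)) ∧
  (∀ ξ ∈ Set.Ioo (-a) a,
    deriv (fun t => μ ξ t) thmin = 0 ∧ deriv (fun t => μ ξ t) thmax = 0) ∧
  (∀ θ ∈ Set.Icc thmin thmax, μ (-a) θ = 1 / (thmax - thmin) ∧ μ a θ = 0)

theorem statement10 (thmin thmax alpha r : ℝ)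
    (hth : 0 < thmin) (hthth : thmin < thmax) (halpha : 0 < alpha) (hr : 0 < r) :
    ∃ ε₀ > (0 : ℝ), ∃ a₁ > (0 : ℝ), ∀ a ≥ a₁, ∀ τ ∈ Set.Icc (0 : ℝ) 1,
      ∀ μ : ℝ → ℝ → ℝ, IsSlabSolution thmin thmax alpha r τ a 0 μ →
        ε₀ < ∫ t in Set.Ioo thmin thmax, μ 0 t := by
  have hthmax : 0 < thmax := hth.trans hthth
  refine ⟨thmin / (8 * thmax), by positivity, 1, one_pos, fun a ha τ hτ μ hsol => ?_⟩
  obtain ⟨hpos, hf2, heq, hneu, hbc⟩ := hsol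
  by_contra hcon
  push_neg at hcon
  have ha0 : (0 : ℝ) < a := lt_of_lt_of_le one_pos ha
  set f := Function.uncurry μ with hf_def
  have hμc : Continuous fun z : ℝ × ℝ => μ z.1 z.2 := hf2.continuous
  have hfd : Differentiable ℝ f := hf2.differentiable (by norm_num)
  set G : ℝ → ℝ := fun t => thmin + τ * (t - thmin) with hG_def
  have hGc : Continuous G := by fun_prop
  have hGlb : ∀ t ∈ Set.Ioo thmin thmax, thmin ≤ G t := by
    intro t ht
    have : 0 ≤ τ * (t - thmin) := mul_nonneg hτ.1 (by linarith [ht.1])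
    simp only [hG_def]; linarith
  have hGub : ∀ t ∈ Set.Ioo thmin thmax, G t ≤ thmax := by
    intro t ht
    have h1 : τ * (t - thmin) ≤ 1 * (t - thmin) :=
      mul_le_mul_of_nonneg_right hτ.2 (by linarith [ht.1])
    simp only [hG_def]; linarith [ht.2]
  -- partial derivative functions
  set φ : ℝ × ℝ → ℝ := fun z => fderiv ℝ f z (1, 0) with hφ_def
  set ψ : ℝ × ℝ → ℝ := fun z => fderiv ℝ f z (0, 1) with hψ_def
  have hfC1 : ContDiff ℝ 1 (fderiv ℝ f) := hf2.fderiv_right (by norm_num)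
  have hφC1 : ContDiff ℝ 1 φ := hfC1.clm_apply contDiff_const
  have hψC1 : ContDiff ℝ 1 ψ := hfC1.clm_apply contDiff_const
  set χ : ℝ × ℝ → ℝ := fun z => fderiv ℝ φ z (1, 0) with hχ_def
  set ω : ℝ × ℝ → ℝ := fun z => fderiv ℝ ψ z (0, 1) with hω_def
  have hχc : Continuous χ := (hφC1.continuous_fderiv one_ne_zero).clm_apply continuous_const
  have hωc : Continuous ω := (hψC1.continuous_fderiv one_ne_zero).clm_apply continuous_const
  have h1 : ∀ t x : ℝ, HasDerivAt (fun y => μ y t) (φ (x, t)) x := fun t x =>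
    aux_hasDerivAt_fst hfd t x
  have h2 : ∀ t x : ℝ, HasDerivAt (fun y => φ (y, t)) (χ (x, t)) x := fun t x =>
    aux_hasDerivAt_fst (hφC1.differentiable one_ne_zero) t x
  have hθ1 : ∀ x t : ℝ, HasDerivAt (fun y => μ x y) (ψ (x, t)) t := fun x t =>
    aux_hasDerivAt_snd hfd x t
  have hθ2 : ∀ x t : ℝ, HasDerivAt (fun y => ψ (x, y)) (ω (x, t)) t := fun x t =>
    aux_hasDerivAt_snd (hψC1.differentiable one_ne_zero) x t
  have hit2ξ : ∀ t x : ℝ, iteratedDeriv 2 (fun y => μ y t) x = χ (x, t) := by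
    intro t x
    have hd1 : deriv (fun y => μ y t) = fun y => φ (y, t) := funext fun y => (h1 t y).deriv
    rw [show (2 : ℕ) = 1 + 1 from rfl, iteratedDeriv_succ, iteratedDeriv_one, hd1]
    exact (h2 t x).deriv
  have hit2θ : ∀ x t : ℝ, iteratedDeriv 2 (fun y => μ x y) t = ω (x, t) := by
    intro x t
    have hd1 : deriv (fun y => μ x y) = fun y => ψ (x, y) := funext fun y => (hθ1 x y).deriv
    rw [show (2 : ℕ) = 1 + 1 from rfl, iteratedDeriv_succ, iteratedDeriv_one, hd1]
    exact (hθ2 x t).deriv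
  -- v and w
  set v : ℝ → ℝ := fun x => ∫ t in Set.Ioo thmin thmax, μ x t with hv_def
  set w : ℝ → ℝ := fun x => ∫ t in Set.Ioo thmin thmax, G t * μ x t with hw_def
  set p : ℝ → ℝ := fun x => ∫ t in Set.Ioo thmin thmax, G t * φ (x, t) with hp_def
  set q : ℝ → ℝ := fun x => ∫ t in Set.Ioo thmin thmax, G t * χ (x, t) with hq_def
  have hGμc : Continuous fun z : ℝ × ℝ => G z.2 * μ z.1 z.2 :=
    (hGc.comp continuous_snd).mul hμc
  have hGφc : Continuous fun z : ℝ × ℝ => G z.2 * φ z :=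
    (hGc.comp continuous_snd).mul (hφC1.continuous)
  have hGχc : Continuous fun z : ℝ × ℝ => G z.2 * χ z :=
    (hGc.comp continuous_snd).mul hχc
  have hw' : ∀ x : ℝ, HasDerivAt w (p x) x := by
    intro x
    exact aux_hasDerivAt_param (h := fun z => G z.2 * μ z.1 z.2) (h' := fun z => G z.2 * φ z)
      hGμc hGφc (fun t y => (h1 t y).const_mul (G t)) thmin thmax x
  have hp' : ∀ x : ℝ, HasDerivAt p (q x) x := by
    intro x
    exact aux_hasDerivAt_param (h := fun z => G z.2 * φ z) (h' := fun z => G z.2 * χ z)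
      hGφc hGχc (fun t y => (h2 t y).const_mul (G t)) thmin thmax x
  have hwc : Continuous w := by
    rw [continuous_iff_continuousAt]; exact fun x => (hw' x).continuousAt
  -- basic integral facts
  have hμInt : ∀ x : ℝ, IntegrableOn (fun t => μ x t) (Set.Ioo thmin thmax) :=
    fun x => aux_integrableOn_Ioo hμc x
  have hGμInt : ∀ x : ℝ, IntegrableOn (fun t => G t * μ x t) (Set.Ioo thmin thmax) :=
    fun x => aux_integrableOn_Ioo hGμc x
  have hωInt : ∀ x : ℝ, IntegrableOn (fun t => ω (x, t)) (Set.Ioo thmin thmax) :=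
    fun x => aux_integrableOn_Ioo hωc x
  have hvnonneg : ∀ x ∈ Set.Icc (-a) a, 0 ≤ v x := by
    intro x hx
    exact setIntegral_nonneg measurableSet_Ioo fun t ht =>
      hpos x hx t (Set.Ioo_subset_Icc_self ht)
  have hwv_lb : ∀ x ∈ Set.Icc (-a) a, thmin * v x ≤ w x := by
    intro x hx
    have := setIntegral_mono_on (s := Set.Ioo thmin thmax)
      (f := fun t => thmin * μ x t) (g := fun t => G t * μ x t)
      ((hμInt x).const_mul thmin) (hGμInt x) measurableSet_Ioo
      (fun t ht => mul_le_mul_of_nonneg_right (hGlb t ht)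
        (hpos x hx t (Set.Ioo_subset_Icc_self ht)))
    rwa [MeasureTheory.integral_const_mul] at this
  have hwv_ub : w 0 ≤ thmax * v 0 := by
    have h0mem : (0 : ℝ) ∈ Set.Icc (-a) a := ⟨by linarith, by linarith⟩
    have := setIntegral_mono_on (s := Set.Ioo thmin thmax)
      (f := fun t => G t * μ 0 t) (g := fun t => thmax * μ 0 t)
      (hGμInt 0) ((hμInt 0).const_mul thmax) measurableSet_Ioo
      (fun t ht => mul_le_mul_of_nonneg_right (hGub t ht)
        (hpos 0 h0mem t (Set.Ioo_subset_Icc_self ht)))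
    rwa [MeasureTheory.integral_const_mul] at this
  have hwnonneg : ∀ x ∈ Set.Icc (-a) a, 0 ≤ w x := by
    intro x hx
    refine setIntegral_nonneg measurableSet_Ioo fun t ht => ?_
    exact mul_nonneg (le_trans hth.le (hGlb t ht)) (hpos x hx t (Set.Ioo_subset_Icc_self ht))
  -- boundary values of w
  have hwma : thmin ≤ w (-a) := by
    have hdel : (0:ℝ) < thmax - thmin := by linarith
    have hEq : Set.EqOn (fun t => G t * μ (-a) t) (fun t => G t * (1 / (thmax - thmin)))
        (Set.Ioo thmin thmax) := fun t ht => by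
      simp only [(hbc t (Set.Ioo_subset_Icc_self ht)).1]
    have h1' : w (-a) = ∫ t in Set.Ioo thmin thmax, G t * (1 / (thmax - thmin)) :=
      setIntegral_congr_fun measurableSet_Ioo hEq
    have h2' : (∫ t in Set.Ioo thmin thmax, thmin * (1 / (thmax - thmin)))
        ≤ ∫ t in Set.Ioo thmin thmax, G t * (1 / (thmax - thmin)) := by
      refine setIntegral_mono_on ?_ ?_ measurableSet_Ioo ?_
      · exact (integrableOn_const (by simp [Real.volume_Ioo]))
      · exact ((hGc.mul continuous_const).continuousOn.integrableOn_compact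
          isCompact_Icc).mono_set Set.Ioo_subset_Icc_self
      · intro t ht
        exact mul_le_mul_of_nonneg_right (hGlb t ht) (by positivity)
    have h3' : (∫ t in Set.Ioo thmin thmax, thmin * (1 / (thmax - thmin))) = thmin := by
      rw [setIntegral_const, measureReal_def, Real.volume_Ioo, ENNReal.toReal_ofReal hdel.le, smul_eq_mul]
      field_simp
    rw [h1']; rw [h3'] at h2'; exact h2'
  have hwa0 : w a = 0 := by
    have hEq : Set.EqOn (fun t => G t * μ a t) (fun _ => (0 : ℝ)) (Set.Ioo thmin thmax) :=
      fun t ht => by simp [(hbc t (Set.Ioo_subset_Icc_self ht)).2]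
    show (∫ t in Set.Ioo thmin thmax, G t * μ a t) = 0
    rw [setIntegral_congr_fun measurableSet_Ioo hEq, integral_zero]
  -- Neumann
  have hNeu : ∀ x ∈ Set.Ioo (-a) a, (∫ t in Set.Ioo thmin thmax, ω (x, t)) = 0 := by
    intro x hx
    have hb1 : ψ (x, thmin) = 0 := by
      rw [← (hθ1 x thmin).deriv]; exact (hneu x hx).1
    have hb2 : ψ (x, thmax) = 0 := by
      rw [← (hθ1 x thmax).deriv]; exact (hneu x hx).2
    have hint : IntervalIntegrable (fun t => ω (x, t)) volume thmin thmax :=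
      (hωc.comp (Continuous.prodMk_right x)).intervalIntegrable _ _
    have hftc : (∫ t in thmin..thmax, ω (x, t)) = ψ (x, thmax) - ψ (x, thmin) :=
      intervalIntegral.integral_eq_sub_of_hasDerivAt (fun t _ => hθ2 x t) hint
    rw [← MeasureTheory.integral_Ioc_eq_integral_Ioo,
      ← intervalIntegral.integral_of_le hthth.le, hftc, hb1, hb2, sub_zero]
  -- the PDE for q
  have hq_eq : ∀ x ∈ Set.Ioo (-a) a, q x = -(r * (1 - v x)) * v x := by
    intro x hx
    have hEq : Set.EqOn (fun t => G t * χ (x, t))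
        (fun t => (-alpha) * ω (x, t) + (-(r * (1 - v x))) * μ x t) (Set.Ioo thmin thmax) := by
      intro t ht
      have hpde := heq x hx t ht
      rw [hit2ξ t x, hit2θ x t] at hpde
      show G t * χ (x, t) = (-alpha) * ω (x, t) + (-(r * (1 - v x))) * μ x t
      have hGt : G t = thmin + τ * (t - thmin) := rfl
      have hvx : v x = ∫ t in Set.Ioo thmin thmax, μ x t := rfl
      rw [hGt, hvx]
      linear_combination -hpde
    have hsplit : q x = ∫ t in Set.Ioo thmin thmax,
        ((-alpha) * ω (x, t) + (-(r * (1 - v x))) * μ x t) :=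
      setIntegral_congr_fun measurableSet_Ioo hEq
    rw [hsplit, MeasureTheory.integral_add ((hωInt x).const_mul (-alpha))
      ((hμInt x).const_mul (-(r * (1 - v x)))), MeasureTheory.integral_const_mul,
      MeasureTheory.integral_const_mul, hNeu x hx]
    simp only [hv_def]
    ring
  -- contradiction setup
  have hw0 : w 0 ≤ thmin / 8 := by
    have : thmax * v 0 ≤ thmax * (thmin / (8 * thmax)) :=
      mul_le_mul_of_nonneg_left hcon hthmax.le
    have heq8 : thmax * (thmin / (8 * thmax)) = thmin / 8 := by field_simp
    linarith [hwv_ub]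
  have hw0lt : w 0 < thmin := by linarith
  -- definition of s
  set A : Set ℝ := {x | x ∈ Set.Icc (-a) 0 ∧ thmin ≤ w x} with hA_def
  have hmemA : -a ∈ A := ⟨⟨le_refl _, by linarith⟩, hwma⟩
  have hAne : A.Nonempty := ⟨-a, hmemA⟩
  have hAbdd : BddAbove A := ⟨0, fun x hx => hx.1.2⟩
  set s := sSup A with hs_def
  have hsle0 : s ≤ 0 := csSup_le hAne fun x hx => hx.1.2
  have hsgema : -a ≤ s := le_csSup hAbdd hmemA
  have hws : thmin ≤ w s := by
    have hcl : closure A ⊆ {x | thmin ≤ w x} :=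
      closure_minimal (fun x hx => hx.2) (isClosed_le continuous_const hwc)
    exact hcl (csSup_mem_closure hAne hAbdd)
  have hs0 : s < 0 := by
    rcases lt_or_eq_of_le hsle0 with h | h
    · exact h
    · exfalso; rw [h] at hws; linarith
  have hlessL : ∀ x, s < x → x ≤ 0 → w x < thmin := by
    intro x h1' h2'
    by_contra hge
    push_neg at hge
    have : x ∈ A := ⟨⟨by linarith, h2'⟩, hge⟩
    exact absurd (le_csSup hAbdd this) (not_le.2 h1')
  -- definition of e
  set E : Set ℝ := {x | x ∈ Set.Icc 0 a ∧ thmin ≤ w x} ∪ {a} with hE_def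
  have hmemE : a ∈ E := Or.inr rfl
  have hEne : E.Nonempty := ⟨a, hmemE⟩
  have hEbdd : BddBelow E := by
    refine ⟨0, fun x hx => ?_⟩
    rcases hx with h | h
    · exact h.1.1
    · have h' : x = a := h
      rw [h']; exact ha0.le
  set e := sInf E with he_def
  have he0 : 0 ≤ e := le_csInf hEne fun x hx => by
    rcases hx with h | h
    · exact h.1.1
    · have h' : x = a := h
      rw [h']; exact ha0.le
  have helea : e ≤ a := csInf_le hEbdd hmemE
  have heOr : thmin ≤ w e ∨ e = a := by
    have hcl : closure E ⊆ {x | thmin ≤ w x} ∪ {a} := by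
      refine closure_minimal ?_ ((isClosed_le continuous_const hwc).union isClosed_singleton)
      intro x hx
      rcases hx with h | h
      · exact Or.inl h.2
      · exact Or.inr h
    have := hcl (csInf_mem_closure hEne hEbdd)
    rcases this with h | h
    · exact Or.inl h
    · exact Or.inr h
  have he0' : 0 < e := by
    rcases lt_or_eq_of_le he0 with h | h
    · exact h
    · exfalso
      rcases heOr with h' | h'
      · rw [← h] at h'; linarith
      · rw [← h] at h'; linarith
  have hlessR : ∀ x, 0 ≤ x → x < e → w x < thmin := by
    intro x h1' h2'
    by_contra hge
    push_neg at hge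
    have : x ∈ E := Or.inl ⟨⟨h1', by linarith⟩, hge⟩
    exact absurd (csInf_le hEbdd this) (not_le.2 h2')
  have hse : s ≤ e := by linarith
  -- concavity
  have hq_nonpos : ∀ x ∈ Set.Ioo s e, q x ≤ 0 := by
    intro x hx
    have hxIoo : x ∈ Set.Ioo (-a) a := ⟨by linarith [hx.1], by linarith [hx.2]⟩
    have hxIcc : x ∈ Set.Icc (-a) a := ⟨hxIoo.1.le, hxIoo.2.le⟩
    have hwlt : w x < thmin := by
      rcases le_or_gt x 0 with h | h
      · exact hlessL x hx.1 h
      · exact hlessR x h.le hx.2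
    have hv0 : 0 ≤ v x := hvnonneg x hxIcc
    have hv1 : v x < 1 := by
      have := hwv_lb x hxIcc
      nlinarith
    rw [hq_eq x hxIoo]
    have hprod : 0 ≤ r * (1 - v x) * v x :=
      mul_nonneg (mul_nonneg hr.le (by linarith)) hv0
    linarith
  have hconc : ConcaveOn ℝ (Set.Icc s e) w := by
    refine concaveOn_of_hasDerivWithinAt2_nonpos (f' := p) (f'' := q) (convex_Icc s e)
      hwc.continuousOn (fun x hx => (hw' x).hasDerivWithinAt)
      (fun x hx => (hp' x).hasDerivWithinAt) (fun x hx => ?_)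
    rw [interior_Icc] at hx
    exact hq_nonpos x hx
  -- chord argument
  have hesub : 0 < e - s := by linarith
  set la := e / (e - s) with hla_def
  set lb := -s / (e - s) with hlb_def
  have hla0 : 0 ≤ la := div_nonneg he0'.le hesub.le
  have hlb0 : 0 ≤ lb := div_nonneg (by linarith) hesub.le
  have hne : e - s ≠ 0 := ne_of_gt hesub
  have hlab : la + lb = 1 := by rw [hla_def, hlb_def]; field_simp; ring
  have hcomb : la * s + lb * e = 0 := by rw [hla_def, hlb_def]; field_simp; ring
  have hchord := hconc.2 (Set.left_mem_Icc.2 hse) (Set.right_mem_Icc.2 hse) hla0 hlb0 hlab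
  rw [smul_eq_mul, smul_eq_mul, smul_eq_mul, smul_eq_mul, hcomb] at hchord
  rcases heOr with hcase | hcase
  · have h1' : la * thmin ≤ la * w s := mul_le_mul_of_nonneg_left hws hla0
    have h2' : lb * thmin ≤ lb * w e := mul_le_mul_of_nonneg_left hcase hlb0
    have hsum : la * thmin + lb * thmin = thmin := by rw [← add_mul, hlab, one_mul]
    linarith
  · have hwe : w e = 0 := by rw [hcase]; exact hwa0
    rw [hwe, mul_zero, add_zero] at hchord
    have h1' : la * thmin ≤ la * w s := mul_le_mul_of_nonneg_left hws hla0
    have hla_half : 1 / 2 ≤ la := by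
      rw [hla_def, hcase]
      rw [le_div_iff₀ (by linarith)]
      linarith
    have h3' : 1 / 2 * thmin ≤ la * thmin := mul_le_mul_of_nonneg_right hla_half hth.le
    linarith
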